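/- Let $X$ be a Banach space whose dual unit ball $B_{X^*}$ is convex block weak*-compact (every sequence in $B_{X^*}$ has a weak*-convergent convex block subsequence). Let $D\subseteq X^*$ be a bounded set and $x\in X$. Then there exists $x_0^*$ in the set $S_1(\mathrm{co}(D))$ of weak*-limits of sequences from the convex hull of $D$ such that $x_0^*(x)=\sup\{x^*(x) : x^*\in \overline{D}^{w^*}\}$. -/

import Mathlib

open Filter Topology

lemma eval_sum_aux {X : Type*} [NormedAddCommGroup X] [NormedSpace ℝ X] (t : Finset ℕ)
    (a : ℕ → ℝ) (f : ℕ → WeakDual ℝ X) (x : X) :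
    (∑ n ∈ t, a n • f n) x = ∑ n ∈ t, a n * f n x := by
  induction t using Finset.cons_induction with
  | empty => simp; rfl
  | cons i t hi ih => rw [Finset.sum_cons, Finset.sum_cons, ← ih]; rfl

/-- Lemma 5.6: if the dual unit ball of `X` is convex block weak*-compact, then for
every nonempty bounded set `D` in the (weak*) dual and every `x ∈ X`, there is a
weak*-limit `x₀` of a sequence from the convex hull of `D` attaining
`sup {x*(x) : x* ∈ weak*-closure of D}`. -/
theorem stmt9 {X : Type*} [NormedAddCommGroup X] [NormedSpace ℝ X] [CompleteSpace X]
    (hblock : ∀ f : ℕ → WeakDual ℝ X, (∀ n, ∀ y : X, |f n y| ≤ ‖y‖) →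
      ∃ (I : ℕ → Finset ℕ) (a : ℕ → ℝ) (g : WeakDual ℝ X),
        (∀ k, (I k).Nonempty) ∧
        (∀ k, ∀ m ∈ I k, ∀ m' ∈ I (k + 1), m < m') ∧
        (∀ n, 0 ≤ a n) ∧ (∀ k, ∑ n ∈ I k, a n = 1) ∧
        Tendsto (fun k => ∑ n ∈ I k, a n • f n) atTop (𝓝 g))
    (D : Set (WeakDual ℝ X)) (hDne : D.Nonempty)
    (M : ℝ) (hD : ∀ φ ∈ D, ∀ y : X, |φ y| ≤ M * ‖y‖) (x : X) :
    ∃ x₀ : WeakDual ℝ X,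
      (∃ u : ℕ → WeakDual ℝ X, (∀ n, u n ∈ convexHull ℝ D) ∧
        Tendsto u atTop (𝓝 x₀)) ∧
      x₀ x = sSup ((fun φ : WeakDual ℝ X => φ x) '' closure D) := by
  set M' : ℝ := max M 1 with hM'def
  have hM'1 : (1 : ℝ) ≤ M' := le_max_right _ _
  have hM'pos : (0 : ℝ) < M' := lt_of_lt_of_le one_pos hM'1
  have hMM' : M ≤ M' := le_max_left _ _
  -- closure bound
  have hclosbd : ∀ ψ ∈ closure D, ψ x ≤ M * ‖x‖ := by
    intro ψ hψ
    have hcl : IsClosed {φ : WeakDual ℝ X | φ x ≤ M * ‖x‖} :=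
      isClosed_le (WeakDual.eval_continuous x) continuous_const
    have hsub : D ⊆ {φ : WeakDual ℝ X | φ x ≤ M * ‖x‖} := by
      intro φ hφ
      exact le_trans (le_abs_self _) (hD φ hφ x)
    exact closure_minimal hsub hcl hψ
  set s : ℝ := sSup ((fun φ : WeakDual ℝ X => φ x) '' closure D) with hsdef
  have hbdd : BddAbove ((fun φ : WeakDual ℝ X => φ x) '' closure D) := by
    refine ⟨M * ‖x‖, ?_⟩
    rintro r ⟨ψ, hψ, rfl⟩
    exact hclosbd ψ hψ
  have hne : ((fun φ : WeakDual ℝ X => φ x) '' closure D).Nonempty :=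
    ⟨_, ⟨hDne.choose, subset_closure hDne.choose_spec, rfl⟩⟩
  have hle_s : ∀ φ ∈ D, φ x ≤ s :=
    fun φ hφ => le_csSup hbdd ⟨φ, subset_closure hφ, rfl⟩
  -- choose approximating sequence in D
  have hexists : ∀ n : ℕ, ∃ φ ∈ D, s - 1 / (n + 1) < φ x := by
    intro n
    have hpos : (0 : ℝ) < 1 / (n + 1) := by positivity
    obtain ⟨r, ⟨ψ, hψ, rfl⟩, hr⟩ :=
      exists_lt_of_lt_csSup hne (show s - 1 / (2 * (n + 1)) < s by
        have : (0 : ℝ) < 1 / (2 * (n + 1)) := by positivity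
        linarith)
    -- ψ ∈ closure D; find φ ∈ D with φ x close to ψ x
    have hopen : IsOpen {φ : WeakDual ℝ X | ψ x - 1 / (2 * (n + 1)) < φ x} :=
      isOpen_lt continuous_const (WeakDual.eval_continuous x)
    have hmem : ψ ∈ {φ : WeakDual ℝ X | ψ x - 1 / (2 * (n + 1)) < φ x} := by
      have h0 : (0 : ℝ) < 1 / (2 * ((n : ℝ) + 1)) := by positivity
      show ψ x - 1 / (2 * ((n : ℝ) + 1)) < ψ x
      linarith
    obtain ⟨φ, hφmem, hφD⟩ := mem_closure_iff.mp hψ _ hopen hmem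
    refine ⟨φ, hφD, ?_⟩
    have h2 : ψ x - 1 / (2 * (n + 1)) < φ x := hφmem
    have heq : 1 / (2 * ((n : ℝ) + 1)) + 1 / (2 * ((n : ℝ) + 1)) = 1 / ((n : ℝ) + 1) := by
      have hc : ((n : ℝ) + 1) ≠ 0 := by positivity
      rw [← add_div, div_eq_div_iff (by positivity) hc]
      ring
    have hr' : s - 1 / (2 * ((n : ℝ) + 1)) < ψ x := hr
    have : s - 1 / (n + 1) < ψ x - 1 / (2 * (n + 1)) := by linarith
    linarith
  choose f hfD hfx using hexists
  -- normalized sequence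
  set f' : ℕ → WeakDual ℝ X := fun n => M'⁻¹ • f n with hf'def
  have hf'bd : ∀ n, ∀ y : X, |f' n y| ≤ ‖y‖ := by
    intro n y
    have : f' n y = M'⁻¹ * f n y := rfl
    rw [this, abs_mul, abs_of_pos (inv_pos.mpr hM'pos)]
    calc M'⁻¹ * |f n y| ≤ M'⁻¹ * (M' * ‖y‖) := by
          apply mul_le_mul_of_nonneg_left _ (le_of_lt (inv_pos.mpr hM'pos))
          exact le_trans (hD (f n) (hfD n) y)
            (mul_le_mul_of_nonneg_right hMM' (norm_nonneg y))
      _ = ‖y‖ := by field_simp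
  obtain ⟨I, a, g, hIne, hImono, ha, hsum, hg⟩ := hblock f' hf'bd
  -- index lemma
  have hIk : ∀ k, ∀ m ∈ I k, k ≤ m := by
    intro k
    induction k with
    | zero => intro m _; exact Nat.zero_le m
    | succ k ih =>
      intro m hm
      obtain ⟨m₀, hm₀⟩ := hIne k
      exact Nat.succ_le_of_lt (lt_of_le_of_lt (ih m₀ hm₀) (hImono k m₀ hm₀ m hm))
  set u : ℕ → WeakDual ℝ X := fun k => ∑ n ∈ I k, a n • f n with hudef
  have huconv : ∀ k, u k ∈ convexHull ℝ D := by
    intro k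
    have := Finset.centerMass_mem_convexHull (I k) (fun i _ => ha i)
      (by rw [hsum k]; norm_num) (fun i (_ : i ∈ I k) => hfD i)
    rwa [Finset.centerMass_eq_of_sum_1 _ _ (hsum k)] at this
  have hueq : ∀ k, u k = M' • (∑ n ∈ I k, a n • f' n) := by
    intro k
    rw [hudef, Finset.smul_sum]
    apply Finset.sum_congr rfl
    intro n _
    rw [hf'def, smul_smul, smul_smul]
    congr 1
    field_simp
  set x₀ : WeakDual ℝ X := M' • g with hx₀def
  have hu_tendsto : Tendsto u atTop (𝓝 x₀) := by
    have : Tendsto (fun k => M' • ∑ n ∈ I k, a n • f' n) atTop (𝓝 (M' • g)) :=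
      hg.const_smul M'
    refine this.congr fun k => (hueq k).symm
  refine ⟨x₀, ⟨u, huconv, hu_tendsto⟩, ?_⟩
  -- evaluation
  have hux : ∀ k, u k x = ∑ n ∈ I k, a n * f n x := fun k => eval_sum_aux _ _ _ _
  have hupper : ∀ k, u k x ≤ s := by
    intro k
    rw [hux k]
    calc ∑ n ∈ I k, a n * f n x ≤ ∑ n ∈ I k, a n * s :=
          Finset.sum_le_sum fun n hn =>
            mul_le_mul_of_nonneg_left (hle_s (f n) (hfD n)) (ha n)
      _ = s := by rw [← Finset.sum_mul, hsum k, one_mul]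
  have hlower : ∀ k, s - 1 / (k + 1) ≤ u k x := by
    intro k
    rw [hux k]
    calc s - 1 / (k + 1) = ∑ n ∈ I k, a n * (s - 1 / (k + 1)) := by
          rw [← Finset.sum_mul, hsum k, one_mul]
      _ ≤ ∑ n ∈ I k, a n * f n x := by
          apply Finset.sum_le_sum
          intro n hn
          apply mul_le_mul_of_nonneg_left _ (ha n)
          have hkn : (k : ℝ) ≤ n := Nat.cast_le.mpr (hIk k n hn)
          have h1 : 1 / ((n : ℝ) + 1) ≤ 1 / ((k : ℝ) + 1) := by
            apply one_div_le_one_div_of_le (by positivity)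
            linarith
          have := hfx n
          linarith
  have hlim1 : Tendsto (fun k => u k x) atTop (𝓝 s) := by
    have hlo : Tendsto (fun k : ℕ => s - 1 / ((k : ℝ) + 1)) atTop (𝓝 (s - 0)) :=
      Tendsto.sub tendsto_const_nhds tendsto_one_div_add_atTop_nhds_zero_nat
    rw [sub_zero] at hlo
    exact tendsto_of_tendsto_of_tendsto_of_le_of_le hlo tendsto_const_nhds hlower hupper
  have hlim2 : Tendsto (fun k => u k x) atTop (𝓝 (x₀ x)) :=
    ((WeakDual.eval_continuous x).tendsto x₀).comp hu_tendsto
  exact tendsto_nhds_unique hlim2 hlim1
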